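/- Let λ ∈ ℝ, α > 0, 0 < β < α, δ > 0, and set γ = √(α² − β²). If x ∈ ℝ satisfies (x/√(δ² + x²)) · K_{λ−3/2}(α√(δ² + x²)) / K_{λ−1/2}(α√(δ² + x²)) = β/α (the mode equation of the generalized hyperbolic distribution GH(λ, α, β, δ, 0)), then x < (β/γ²)·[λ − 1/2 + √((λ − 1/2)² + δ²γ²)]. -/

import Mathlib

open Real MeasureTheory

/-- Modified Bessel function of the second kind. -/
noncomputable def besselK (ν x : ℝ) : ℝ :=
  ∫ t in Set.Ioi (0:ℝ), Real.exp (-x * Real.cosh t) * Real.cosh (ν * t)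

section BesselAux

open Set Filter
open scoped ENNReal


lemma sq_le_sinh_sq (u : ℝ) : u ^ 2 ≤ Real.sinh u ^ 2 := by
  rcases le_total 0 u with h | h
  · nlinarith [Real.self_le_sinh_iff.2 h]
  · nlinarith [Real.sinh_le_self_iff.2 h]

lemma one_add_sq_half_le_cosh (t : ℝ) : 1 + t ^ 2 / 2 ≤ Real.cosh t := by
  have h := Real.cosh_two_mul (t / 2)
  rw [show 2 * (t / 2) = t by ring] at h
  nlinarith [Real.cosh_sq (t / 2), sq_le_sinh_sq (t / 2)]

lemma cosh_le_exp_abs (u : ℝ) : Real.cosh u ≤ Real.exp |u| := by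
  rw [Real.cosh_eq]
  have h1 : Real.exp u ≤ Real.exp |u| := Real.exp_le_exp.2 (le_abs_self u)
  have h2 : Real.exp (-u) ≤ Real.exp |u| := Real.exp_le_exp.2 (neg_le_abs u)
  linarith

lemma abs_sinh_le_cosh (u : ℝ) : |Real.sinh u| ≤ Real.cosh u := by
  have h := Real.cosh_sq u
  have h2 := Real.cosh_pos u
  have h3 := abs_nonneg (Real.sinh u)
  nlinarith [sq_abs (Real.sinh u)]

lemma key_bound (ν x t : ℝ) (hx : 0 < x) (ht : 0 ≤ t) :
    Real.exp (-x * Real.cosh t) * Real.cosh (ν * t) ≤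
      Real.exp (ν ^ 2 / (2 * x) - x) * Real.exp (-(x / 2) * (t - |ν| / x) ^ 2) := by
  have hc : (0:ℝ) < Real.cosh (ν * t) := Real.cosh_pos _
  calc Real.exp (-x * Real.cosh t) * Real.cosh (ν * t)
      ≤ Real.exp (-x * (1 + t ^ 2 / 2)) * Real.exp (|ν| * t) := by
        apply mul_le_mul
        · exact Real.exp_le_exp.2 (by nlinarith [one_add_sq_half_le_cosh t])
        · calc Real.cosh (ν * t) ≤ Real.exp |ν * t| := cosh_le_exp_abs _
            _ = Real.exp (|ν| * t) := by rw [abs_mul, abs_of_nonneg ht]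
        · exact hc.le
        · positivity
    _ = Real.exp (ν ^ 2 / (2 * x) - x) * Real.exp (-(x / 2) * (t - |ν| / x) ^ 2) := by
        rw [← Real.exp_add, ← Real.exp_add]
        congr 1
        have hb : |ν| ^ 2 = ν ^ 2 := sq_abs ν
        field_simp
        ring_nf
        nlinarith [hb]

lemma gauss_integrable (b d : ℝ) (hb : 0 < b) :
    Integrable (fun t : ℝ => Real.exp (-b * (t - d) ^ 2)) := by
  exact (integrable_exp_neg_mul_sq hb).comp_sub_right d

lemma besselK_integrableOn (ν x : ℝ) (hx : 0 < x) :
    IntegrableOn (fun t => Real.exp (-x * Real.cosh t) * Real.cosh (ν * t)) (Ioi (0:ℝ)) := by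
  apply Integrable.mono'
    (((gauss_integrable (x / 2) (|ν| / x) (by positivity)).const_mul
      (Real.exp (ν ^ 2 / (2 * x) - x))).integrableOn)
  · exact (Continuous.mul (by continuity) (by continuity)).aestronglyMeasurable
  · filter_upwards [ae_restrict_mem measurableSet_Ioi] with t ht
    rw [Real.norm_eq_abs, abs_of_nonneg (by positivity)]
    exact key_bound ν x t hx (le_of_lt ht)

lemma tendsto_gauss (b d C : ℝ) (hb : 0 < b) :
    Tendsto (fun t : ℝ => C * Real.exp (-b * (t - d) ^ 2)) atTop (nhds 0) := by
  have h1 : Tendsto (fun t : ℝ => (t - d) ^ 2) atTop atTop :=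
    (tendsto_pow_atTop two_ne_zero).comp (tendsto_atTop_add_const_right _ (-d) tendsto_id)
  have h2 : Tendsto (fun t : ℝ => -b * (t - d) ^ 2) atTop atBot := by
    exact Tendsto.const_mul_atTop_of_neg (neg_lt_zero.2 hb) h1
  have := (Real.tendsto_exp_atBot.comp h2).const_mul C
  simpa using this

lemma besselK_pos (ν x : ℝ) (hx : 0 < x) : 0 < besselK ν x := by
  rw [besselK, setIntegral_pos_iff_support_of_nonneg_ae]
  · have hsub : Ioi (0:ℝ) ⊆
        (Function.support fun t => Real.exp (-x * Real.cosh t) * Real.cosh (ν * t)) ∩ Ioi 0 :=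
      fun t ht => ⟨ne_of_gt (by positivity), ht⟩
    calc (0:ℝ≥0∞) < volume (Ioi (0:ℝ)) := by simp [Real.volume_Ioi]
      _ ≤ _ := measure_mono hsub
  · filter_upwards with t
    positivity
  · exact besselK_integrableOn ν x hx

lemma besselK_rec (ν x : ℝ) (hx : 0 < x) :
    x / 2 * (besselK (ν + 1) x - besselK (ν - 1) x) = ν * besselK ν x := by
  set g : ℝ → ℝ := fun t => Real.exp (-x * Real.cosh t) * Real.sinh (ν * t) with hg
  set g' : ℝ → ℝ := fun t => ν * (Real.exp (-x * Real.cosh t) * Real.cosh (ν * t)) -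
      x / 2 * (Real.exp (-x * Real.cosh t) * Real.cosh ((ν + 1) * t)
        - Real.exp (-x * Real.cosh t) * Real.cosh ((ν - 1) * t)) with hg'
  have hderiv : ∀ t : ℝ, HasDerivAt g (g' t) t := by
    intro t
    have h1 : HasDerivAt (fun t : ℝ => -x * Real.cosh t) (-x * Real.sinh t) t :=
      (Real.hasDerivAt_cosh t).const_mul (-x)
    have h2 : HasDerivAt (fun t : ℝ => Real.exp (-x * Real.cosh t))
        (Real.exp (-x * Real.cosh t) * (-x * Real.sinh t)) t := h1.exp
    have h3 : HasDerivAt (fun t : ℝ => Real.sinh (ν * t)) (Real.cosh (ν * t) * ν) t := by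
      exact ((Real.hasDerivAt_sinh (ν * t)).comp t ((hasDerivAt_id t).const_mul ν)).congr_deriv (by simp)
    have h4 : HasDerivAt g _ t := h2.mul h3
    convert h4 using 1
    have e1 : Real.cosh ((ν + 1) * t)
        = Real.cosh (ν * t) * Real.cosh t + Real.sinh (ν * t) * Real.sinh t := by
      rw [show (ν + 1) * t = ν * t + t by ring, Real.cosh_add]
    have e2 : Real.cosh ((ν - 1) * t)
        = Real.cosh (ν * t) * Real.cosh t - Real.sinh (ν * t) * Real.sinh t := by
      rw [show (ν - 1) * t = ν * t - t by ring, Real.cosh_sub]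
    simp only [hg', e1, e2]
    ring
  have hint : IntegrableOn g' (Ioi (0:ℝ)) := by
    have isub : IntegrableOn (fun t => Real.exp (-x * Real.cosh t) * Real.cosh ((ν + 1) * t)
        - Real.exp (-x * Real.cosh t) * Real.cosh ((ν - 1) * t)) (Ioi (0:ℝ)) := by
      simpa [Pi.sub_def] using
        (besselK_integrableOn (ν+1) x hx).sub (besselK_integrableOn (ν-1) x hx)
    have := ((besselK_integrableOn ν x hx).const_mul ν).sub (isub.const_mul (x/2))
    simpa [Pi.sub_def, hg', IntegrableOn] using this
  have htend : Tendsto g atTop (nhds 0) := by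
    refine squeeze_zero_norm' ?_ (tendsto_gauss (x/2) (|ν|/x)
      (Real.exp (ν ^ 2 / (2 * x) - x)) (by positivity))
    · filter_upwards [eventually_ge_atTop (0:ℝ)] with t ht
      show ‖Real.exp (-x * Real.cosh t) * Real.sinh (ν * t)‖ ≤ _
      rw [Real.norm_eq_abs]
      calc |Real.exp (-x * Real.cosh t) * Real.sinh (ν * t)|
          = Real.exp (-x * Real.cosh t) * |Real.sinh (ν * t)| := by
            rw [abs_mul, abs_of_pos (Real.exp_pos _)]
        _ ≤ Real.exp (-x * Real.cosh t) * Real.cosh (ν * t) :=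
            mul_le_mul_of_nonneg_left (abs_sinh_le_cosh _) (Real.exp_pos _).le
        _ ≤ _ := key_bound ν x t hx ht
  have hFTC := integral_Ioi_of_hasDerivAt_of_tendsto
    (f := g) (f' := g') (a := 0) (m := 0)
    (hderiv 0).continuousAt.continuousWithinAt (fun t _ => hderiv t) hint htend
  have hg0 : g 0 = 0 := by simp [hg]
  rw [hg0, sub_zero] at hFTC
  have i1 : IntegrableOn (fun t => ν * (Real.exp (-x * Real.cosh t) * Real.cosh (ν * t)))
      (Ioi (0:ℝ)) := (besselK_integrableOn ν x hx).const_mul ν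
  have isub : IntegrableOn (fun t => Real.exp (-x * Real.cosh t) * Real.cosh ((ν + 1) * t)
      - Real.exp (-x * Real.cosh t) * Real.cosh ((ν - 1) * t)) (Ioi (0:ℝ)) := by
    simpa [Pi.sub_def] using
      (besselK_integrableOn (ν+1) x hx).sub (besselK_integrableOn (ν-1) x hx)
  have i2 : IntegrableOn (fun t => x / 2 * (Real.exp (-x * Real.cosh t) * Real.cosh ((ν + 1) * t)
      - Real.exp (-x * Real.cosh t) * Real.cosh ((ν - 1) * t))) (Ioi (0:ℝ)) :=
    isub.const_mul (x/2)
  have hsplit : ∫ t in Ioi (0:ℝ), g' t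
      = ν * besselK ν x - x / 2 * (besselK (ν + 1) x - besselK (ν - 1) x) := by
    rw [besselK, besselK, besselK]
    rw [show (∫ t in Ioi (0:ℝ), g' t) = ∫ t in Ioi (0:ℝ),
      ((fun t => ν * (Real.exp (-x * Real.cosh t) * Real.cosh (ν * t))) t
        - (fun t => x / 2 * (Real.exp (-x * Real.cosh t) * Real.cosh ((ν + 1) * t)
          - Real.exp (-x * Real.cosh t) * Real.cosh ((ν - 1) * t))) t) from rfl]
    rw [integral_sub i1 i2, integral_const_mul, integral_const_mul,
      integral_sub (besselK_integrableOn (ν+1) x hx) (besselK_integrableOn (ν-1) x hx)]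
  rw [hFTC] at hsplit
  linarith

lemma besselK_turan (ν x : ℝ) (hx : 0 < x) :
    besselK ν x ^ 2 < besselK (ν - 1) x * besselK (ν + 1) x := by
  set F : ℝ → ℝ → ℝ := fun μ t => Real.exp (-x * Real.cosh t) * Real.cosh (μ * t) with hF
  have hFpos : ∀ μ t, 0 < F μ t := fun μ t => by
    simp only [hF]; positivity
  have hFcont : ∀ μ, Continuous (F μ) := fun μ => by
    simp only [hF]; fun_prop
  have hint : ∀ μ, IntegrableOn (F μ) (Ioi (0:ℝ)) := fun μ => besselK_integrableOn μ x hx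
  set G : ℝ → ℝ := fun t => Real.sqrt (F (ν - 1) t * F (ν + 1) t) with hGdef
  have hGcont : Continuous G := (Real.continuous_sqrt).comp ((hFcont _).mul (hFcont _))
  have hGnonneg : ∀ t, 0 ≤ G t := fun t => Real.sqrt_nonneg _
  have hGint : IntegrableOn G (Ioi (0:ℝ)) := by
    apply Integrable.mono' (((hint (ν-1)).add (hint (ν+1))).const_mul (1/2))
    · exact hGcont.aestronglyMeasurable
    · filter_upwards with t
      rw [Real.norm_eq_abs, abs_of_nonneg (hGnonneg t)]
      have h1 := hFpos (ν-1) t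
      have h2 := hFpos (ν+1) t
      have hs := Real.sq_sqrt h1.le
      have hs2 := Real.sq_sqrt h2.le
      rw [hGdef]
      simp only
      rw [Real.sqrt_mul h1.le]
      simp only [Pi.add_apply]
      nlinarith [sq_nonneg (Real.sqrt (F (ν-1) t) - Real.sqrt (F (ν+1) t)),
        Real.sqrt_nonneg (F (ν-1) t), Real.sqrt_nonneg (F (ν+1) t)]
  -- pointwise strict inequality
  have hdiff : ∀ t ∈ Ioi (0:ℝ), F ν t < G t := by
    intro t ht
    rw [hGdef]
    simp only
    rw [show F ν t = |F ν t| from (abs_of_pos (hFpos ν t)).symm, ← Real.sqrt_sq_eq_abs]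
    apply Real.sqrt_lt_sqrt (sq_nonneg _)
    have e1 : Real.cosh ((ν + 1) * t)
        = Real.cosh (ν * t) * Real.cosh t + Real.sinh (ν * t) * Real.sinh t := by
      rw [show (ν + 1) * t = ν * t + t by ring, Real.cosh_add]
    have e2 : Real.cosh ((ν - 1) * t)
        = Real.cosh (ν * t) * Real.cosh t - Real.sinh (ν * t) * Real.sinh t := by
      rw [show (ν - 1) * t = ν * t - t by ring, Real.cosh_sub]
    have hsinh : 0 < Real.sinh t := Real.sinh_pos_iff.2 ht
    have hC := Real.cosh_sq t
    have hc := Real.cosh_sq (ν * t)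
    have hE := Real.exp_pos (-x * Real.cosh t)
    simp only [hF, e1, e2]
    nlinarith [mul_pos (mul_pos hE hE) (mul_pos hsinh hsinh)]
  -- strict integral inequality
  have hlt : besselK ν x < ∫ t in Ioi (0:ℝ), G t := by
    have h0 : 0 < ∫ t in Ioi (0:ℝ), (G t - F ν t) := by
      rw [setIntegral_pos_iff_support_of_nonneg_ae]
      · have hsub : Ioi (0:ℝ) ⊆ (Function.support fun t => G t - F ν t) ∩ Ioi 0 :=
          fun t ht => ⟨ne_of_gt (sub_pos.2 (hdiff t ht)), ht⟩
        calc (0:ℝ≥0∞) < volume (Ioi (0:ℝ)) := by simp [Real.volume_Ioi]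
          _ ≤ _ := measure_mono hsub
      · filter_upwards [ae_restrict_mem measurableSet_Ioi] with t ht
        exact sub_nonneg.2 (hdiff t ht).le
      · exact hGint.sub (hint ν)
    rw [integral_sub hGint (hint ν)] at h0
    have : besselK ν x = ∫ t in Ioi (0:ℝ), F ν t := rfl
    linarith
  -- Cauchy-Schwarz
  have hCS : (∫ t in Ioi (0:ℝ), G t)
      ≤ Real.sqrt (besselK (ν - 1) x) * Real.sqrt (besselK (ν + 1) x) := by
    have hconj : Real.HolderConjugate 2 2 := Real.HolderConjugate.two_two
    have hof : ENNReal.ofReal (2:ℝ) = 2 := by norm_num [ENNReal.ofReal_ofNat]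
    have m1 : MemLp (fun t => Real.sqrt (F (ν - 1) t)) (ENNReal.ofReal 2)
        (volume.restrict (Ioi (0:ℝ))) := by
      rw [hof]
      refine (memLp_two_iff_integrable_sq
        ((Real.continuous_sqrt.comp (hFcont _)).aestronglyMeasurable)).2 ?_
      have : (fun t => Real.sqrt (F (ν-1) t) ^ 2) = F (ν-1) := by
        funext t; exact Real.sq_sqrt (hFpos _ t).le
      simp only [Function.comp_def]; rw [this]; exact hint _
    have m2 : MemLp (fun t => Real.sqrt (F (ν + 1) t)) (ENNReal.ofReal 2)
        (volume.restrict (Ioi (0:ℝ))) := by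
      rw [hof]
      refine (memLp_two_iff_integrable_sq
        ((Real.continuous_sqrt.comp (hFcont _)).aestronglyMeasurable)).2 ?_
      have : (fun t => Real.sqrt (F (ν+1) t) ^ 2) = F (ν+1) := by
        funext t; exact Real.sq_sqrt (hFpos _ t).le
      simp only [Function.comp_def]; rw [this]; exact hint _
    have h := integral_mul_le_Lp_mul_Lq_of_nonneg hconj
      (Eventually.of_forall fun t => Real.sqrt_nonneg _)
      (Eventually.of_forall fun t => Real.sqrt_nonneg _) m1 m2
    have hL : (∫ t in Ioi (0:ℝ), Real.sqrt (F (ν-1) t) * Real.sqrt (F (ν+1) t))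
        = ∫ t in Ioi (0:ℝ), G t := by
      congr 1; funext t
      rw [hGdef]; simp only
      rw [Real.sqrt_mul (hFpos _ t).le]
    have hR1 : (∫ t in Ioi (0:ℝ), Real.sqrt (F (ν-1) t) ^ (2:ℝ)) = besselK (ν-1) x := by
      rw [show besselK (ν-1) x = ∫ t in Ioi (0:ℝ), F (ν-1) t from rfl]
      congr 1; funext t
      rw [Real.rpow_two, Real.sq_sqrt (hFpos _ t).le]
    have hR2 : (∫ t in Ioi (0:ℝ), Real.sqrt (F (ν+1) t) ^ (2:ℝ)) = besselK (ν+1) x := by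
      rw [show besselK (ν+1) x = ∫ t in Ioi (0:ℝ), F (ν+1) t from rfl]
      congr 1; funext t
      rw [Real.rpow_two, Real.sq_sqrt (hFpos _ t).le]
    rw [hL, hR1, hR2] at h
    calc (∫ t in Ioi (0:ℝ), G t)
        ≤ besselK (ν-1) x ^ (1/2:ℝ) * besselK (ν+1) x ^ (1/2:ℝ) := h
      _ = Real.sqrt (besselK (ν - 1) x) * Real.sqrt (besselK (ν + 1) x) := by
          rw [← Real.sqrt_eq_rpow, ← Real.sqrt_eq_rpow]
  have hA := besselK_pos (ν-1) x hx
  have hC' := besselK_pos (ν+1) x hx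
  have hB := besselK_pos ν x hx
  nlinarith [Real.sq_sqrt hA.le, Real.sq_sqrt hC'.le, Real.sqrt_nonneg (besselK (ν-1) x),
    Real.sqrt_nonneg (besselK (ν+1) x), hlt.trans_le hCS]

lemma besselK_ratio (ν x : ℝ) (hx : 0 < x) :
    x * besselK ν x < (ν + Real.sqrt (ν ^ 2 + x ^ 2)) * besselK (ν - 1) x := by
  have hrec := besselK_rec ν x hx
  have htur := besselK_turan ν x hx
  have hA := besselK_pos (ν - 1) x hx
  have hB := besselK_pos ν x hx
  set A := besselK (ν - 1) x
  set B := besselK ν x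
  set C := besselK (ν + 1) x
  set R := Real.sqrt (ν ^ 2 + x ^ 2) with hRdef
  have hR2 : R ^ 2 = ν ^ 2 + x ^ 2 := Real.sq_sqrt (by positivity)
  have hR0 : 0 ≤ R := Real.sqrt_nonneg _
  -- from recurrence: x * C = x * A + 2 * ν * B
  have hC : x * C = x * A + 2 * ν * B := by
    field_simp at hrec
    linarith
  -- Turan * x^2 : x^2 B^2 < x^2 A^2 + 2 ν x A B
  have hq : x ^ 2 * B ^ 2 < x ^ 2 * A ^ 2 + 2 * ν * x * A * B := by
    have h1 : x ^ 2 * B ^ 2 < x * A * (x * C) := by nlinarith [htur, mul_pos hx hx]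
    rw [hC] at h1
    nlinarith [h1]
  by_contra hcon
  push_neg at hcon
  -- hcon : (ν + R) * A ≤ x * B
  have h2 : 0 ≤ x * B - ν * A - R * A := by nlinarith [hcon]
  have h3 : 0 ≤ x * B - ν * A + R * A := by nlinarith [h2, mul_nonneg hR0 hA.le]
  nlinarith [mul_nonneg h2 h3, hq, hR2]

set_option maxHeartbeats 800000 in
theorem stmt_0 (lam α β δ γ : ℝ) (hα : 0 < α) (hβ : 0 < β) (hβα : β < α) (hδ : 0 < δ)
    (hγ : γ = Real.sqrt (α ^ 2 - β ^ 2)) (x : ℝ)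
    (hx : x / Real.sqrt (δ ^ 2 + x ^ 2) *
        (besselK (lam - 3 / 2) (α * Real.sqrt (δ ^ 2 + x ^ 2)) /
          besselK (lam - 1 / 2) (α * Real.sqrt (δ ^ 2 + x ^ 2))) = β / α) :
    x < β / γ ^ 2 * (lam - 1 / 2 + Real.sqrt ((lam - 1 / 2) ^ 2 + δ ^ 2 * γ ^ 2)) := by
  set s := Real.sqrt (δ ^ 2 + x ^ 2) with hsdef
  have hs : 0 < s := Real.sqrt_pos.2 (by positivity)
  have hs2 : s ^ 2 = δ ^ 2 + x ^ 2 := Real.sq_sqrt (by positivity)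
  set y := α * s with hy
  have hy0 : 0 < y := mul_pos hα hs
  set A := besselK (lam - 3 / 2) y with hAdef
  set B := besselK (lam - 1 / 2) y with hBdef
  have hA : 0 < A := besselK_pos _ _ hy0
  have hB : 0 < B := besselK_pos _ _ hy0
  set μ := lam - 1 / 2 with hμ
  -- x is positive
  have hxpos : 0 < x := by
    by_contra h
    push_neg at h
    have h1 : x / s * (A / B) ≤ 0 :=
      mul_nonpos_of_nonpos_of_nonneg (div_nonpos_of_nonpos_of_nonneg h hs.le)
        (div_nonneg hA.le hB.le)
    rw [hx] at h1
    exact absurd h1 (not_le.2 (div_pos hβ hα))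
  -- ratio inequality
  have hratio := besselK_ratio μ y hy0
  rw [show μ - 1 = lam - 3 / 2 by rw [hμ]; ring] at hratio
  set R := Real.sqrt (μ ^ 2 + y ^ 2) with hRdef
  have hR2 : R ^ 2 = μ ^ 2 + α ^ 2 * δ ^ 2 + α ^ 2 * x ^ 2 := by
    rw [hRdef, Real.sq_sqrt (by positivity)]
    rw [hy, mul_pow]
    nlinarith [hs2]
  have hR0 : 0 ≤ R := Real.sqrt_nonneg _
  -- key algebraic identity from hx : α x A = β s B
  have key : α * x * A = β * (s * B) := by
    field_simp at hx
    linarith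
  -- main inequality : α² x < β (μ + R)
  have hmain : α ^ 2 * x < β * (μ + R) := by
    have h1 : y * B * (β * s) < (μ + R) * A * (β * s) :=
      mul_lt_mul_of_pos_right hratio (by positivity)
    rw [hy] at h1
    -- α s B β s = α β s² B ; use key : β s B = α x A
    have h2 : α * s * B * (β * s) = α * s * (α * x * A) := by
      rw [key]; ring
    rw [h2] at h1
    have h3 : 0 < s * A := mul_pos hs hA
    have h4 : α ^ 2 * x * (s * A) < β * (μ + R) * (s * A) := by linear_combination h1
    exact lt_of_mul_lt_mul_right h4 h3.le
  -- gamma facts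
  have hγ2 : γ ^ 2 = α ^ 2 - β ^ 2 := by
    rw [hγ]; exact Real.sq_sqrt (by nlinarith)
  have hγpos : 0 < γ ^ 2 := by nlinarith
  set S := Real.sqrt (μ ^ 2 + δ ^ 2 * γ ^ 2) with hSdef
  have hS2 : S ^ 2 = μ ^ 2 + δ ^ 2 * γ ^ 2 := Real.sq_sqrt (by positivity)
  have hS0 : 0 ≤ S := Real.sqrt_nonneg _
  have hSgt : μ ^ 2 < S ^ 2 := by nlinarith [hS2, mul_pos (mul_pos hδ hδ) hγpos]
  have hSpos : 0 < S := by nlinarith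
  have hfin : γ ^ 2 * x < β * (μ + S) := by
    rcases le_or_gt (γ ^ 2 * x) (β * μ) with h | h
    · have : 0 < β * S := mul_pos hβ hSpos
      linarith
    · have hαx : 0 < α ^ 2 * x - β * μ := by nlinarith [hxpos, hγ2]
      have e1 : (α ^ 2 * x - β * μ) ^ 2 < β ^ 2 * R ^ 2 := by
        nlinarith [hmain, hαx, mul_nonneg hβ.le hR0]
      have hqlt : γ ^ 2 * x ^ 2 - 2 * β * μ * x - β ^ 2 * δ ^ 2 < 0 := by
        have h5 : α ^ 2 * (γ ^ 2 * x ^ 2 - 2 * β * μ * x - β ^ 2 * δ ^ 2)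
            = (α ^ 2 * x - β * μ) ^ 2 - β ^ 2 * R ^ 2 := by
          rw [hγ2, hR2]; ring
        by_contra hcon
        push_neg at hcon
        have h6 := mul_nonneg (mul_pos hα hα).le hcon
        rw [show α * α = α ^ 2 by ring, h5] at h6
        linarith [e1]
      have e2 : (γ ^ 2 * x - β * μ) ^ 2 < β ^ 2 * S ^ 2 := by
        have h7 : (γ ^ 2 * x - β * μ) ^ 2 - β ^ 2 * S ^ 2
            = γ ^ 2 * (γ ^ 2 * x ^ 2 - 2 * β * μ * x - β ^ 2 * δ ^ 2) := by
          rw [hS2]; ring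
        have h8 := mul_neg_of_pos_of_neg hγpos hqlt
        linarith [h7, h8]
      nlinarith [e2, h, mul_nonneg hβ.le hS0]
  rw [div_mul_eq_mul_div, lt_div_iff₀ hγpos]
  linarith [hfin]

end BesselAux
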